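/- arXiv:1503.04485 — 2 statements merged into one kernel-verified Lean document; each statement's English description precedes it below -/
import Mathlib

section
/- Let α > −1 and let m, n be nonnegative integers. Then the parameter-raising expansion (m + n + α + 1) · P^α_{m,n} = [(m + α + 1)(n + α + 1)/(α + 1)] · P^{α+1}_{m,n} − [m·n/(α + 1)] · P^{α+1}_{m−1, n−1} holds as an identity of functions on the unit disk, with the convention that P^{α+1}_{m−1,n−1} ≡ 0 if m = 0 or n = 0. -/
open MeasureTheory

noncomputable section

abbrev E (d : ℕ) := EuclideanSpace ℝ (Fin d)

/-- The measure `ρ(x)^α dx` restricted to the unit ball `B^d`, where `ρ(x) = 1 - |x|²`. -/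
def zmeasure (d : ℕ) (a : ℝ) : Measure (E d) :=
  (volume.restrict (Metric.ball (0 : E d) 1)).withDensity
    (fun x => ENNReal.ofReal ((1 - ‖x‖ ^ 2) ^ a))

/-- Squared weighted L² norm `‖u‖²_{L²_{ρ^a}(B^d)}`. -/
def wnormSq (d : ℕ) (a : ℝ) (u : E d → ℂ) : ℝ :=
  ∫ x, ‖u x‖ ^ 2 ∂ zmeasure d a

/-- Weighted L² norm `‖u‖_{L²_{ρ^a}(B^d)}`. -/
def wnorm (d : ℕ) (a : ℝ) (u : E d → ℂ) : ℝ := Real.sqrt (wnormSq d a u)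

/-- The Jacobi polynomial `P^{(a,b)}_n` (explicit hypergeometric form; it is orthogonal on
`(-1,1)` w.r.t. `(1-t)^a (1+t)^b` and normalized by `P^{(a,b)}_n(1) = binom(n+a, n)`). -/
def jacobiP (a b : ℝ) (n : ℕ) (x : ℝ) : ℝ :=
  ∑ s ∈ Finset.range (n + 1),
    (Real.Gamma (a + n + 1) / (Real.Gamma (a + s + 1) * (Nat.factorial (n - s)))) *
    (Real.Gamma (b + n + 1) / (Real.Gamma (b + ((n - s : ℕ) : ℝ) + 1) * (Nat.factorial s))) *
    ((x - 1) / 2) ^ s * ((x + 1) / 2) ^ (n - s)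

/-- The Zernike polynomial `P^a_{m,n}` on the unit disk (Wünsche's normalization):
`P^a_{m,n} = [Γ(min(m,n)+1)Γ(a+1)/Γ(min(m,n)+a+1)] r^{|m−n|} e^{i(m−n)θ}
P^{(a,|m−n|)}_{min(m,n)}(2r²−1)`. -/
def zern (a : ℝ) (m n : ℕ) (x : E 2) : ℂ :=
  (((Real.Gamma ((min m n : ℕ) + 1) * Real.Gamma (a + 1) /
      Real.Gamma ((min m n : ℕ) + a + 1)) : ℝ) : ℂ) *
  (if n ≤ m then ((x 0 : ℂ) + (x 1 : ℂ) * Complex.I) ^ (m - n)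
   else ((x 0 : ℂ) - (x 1 : ℂ) * Complex.I) ^ (n - m)) *
  ((jacobiP a ((max m n - min m n : ℕ) : ℝ) (min m n) (2 * ‖x‖ ^ 2 - 1) : ℝ) : ℂ)

def jcf (a b : ℝ) (n s : ℕ) : ℝ :=
  (Real.Gamma (a + n + 1) / (Real.Gamma (a + s + 1) * (Nat.factorial (n - s)))) *
  (Real.Gamma (b + n + 1) / (Real.Gamma (b + ((n - s : ℕ) : ℝ) + 1) * (Nat.factorial s)))

lemma gamma_ne (s : ℝ) (h : 0 < s) : Real.Gamma s ≠ 0 := (Real.Gamma_pos_of_pos h).ne'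

lemma gamma_step (s : ℝ) (h : 0 < s) : Real.Gamma (s + 1) = s * Real.Gamma s :=
  Real.Gamma_add_one h.ne'

lemma fact_cast (k : ℕ) : (((k+1).factorial : ℕ) : ℝ) = ((k:ℝ)+1) * (k.factorial : ℝ) := by
  rw [Nat.factorial_succ]; push_cast; ring

def Kf (a b : ℝ) (t d : ℕ) : ℝ :=
  Real.Gamma (a+(t:ℝ)+(d:ℝ)+3) * Real.Gamma (b+(t:ℝ)+(d:ℝ)+2) /
    (Real.Gamma (a+(t:ℝ)+2) * Real.Gamma (b+(d:ℝ)+1) * (d.factorial : ℝ) * (t.factorial : ℝ))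

section
variable (a b : ℝ) (t d : ℕ)

lemma pos_ta (ha : 0 < a + 1) : (0:ℝ) < a+(t:ℝ)+2 := by
  have : (0:ℝ) ≤ t := Nat.cast_nonneg t; linarith
lemma pos_tda (ha : 0 < a + 1) : (0:ℝ) < a+(t:ℝ)+(d:ℝ)+3 := by
  have h1 : (0:ℝ) ≤ t := Nat.cast_nonneg t; have h2 : (0:ℝ) ≤ d := Nat.cast_nonneg d; linarith
lemma pos_db (hb : 0 ≤ b) : (0:ℝ) < b+(d:ℝ)+1 := by
  have : (0:ℝ) ≤ d := Nat.cast_nonneg d; linarith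
lemma pos_tdb (hb : 0 ≤ b) : (0:ℝ) < b+(t:ℝ)+(d:ℝ)+2 := by
  have h1 : (0:ℝ) ≤ t := Nat.cast_nonneg t; have h2 : (0:ℝ) ≤ d := Nat.cast_nonneg d; linarith

lemma fact_ne (k : ℕ) : ((k.factorial : ℕ) : ℝ) ≠ 0 := Nat.cast_ne_zero.2 k.factorial_ne_zero

lemma jcf_L (ha : 0 < a + 1) (hb : 0 ≤ b) :
    jcf a b (t+1+d+1) (t+1)
      = (b+(t:ℝ)+d+2)/((1+(d:ℝ))*(1+(t:ℝ))*(b+(d:ℝ)+1)) * Kf a b t d := by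
  unfold jcf Kf
  rw [show t+1+d+1 - (t+1) = d+1 from by omega]
  push_cast
  rw [show a + ((t:ℝ) + 1 + (d:ℝ) + 1) + 1 = a+(t:ℝ)+(d:ℝ)+3 from by ring,
      show a + ((t:ℝ) + 1) + 1 = a+(t:ℝ)+2 from by ring,
      show b + ((t:ℝ) + 1 + (d:ℝ) + 1) + 1 = (b+(t:ℝ)+(d:ℝ)+2)+1 from by ring,
      gamma_step _ (pos_tdb b t d hb),
      show b + ((d:ℝ) + 1) + 1 = (b+(d:ℝ)+1)+1 from by ring,
      gamma_step _ (pos_db b d hb), fact_cast d, fact_cast t]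
  have e1 := gamma_ne _ (pos_ta a t ha)
  have e2 := gamma_ne _ (pos_db b d hb)
  have e3 := fact_ne d
  have e4 := fact_ne t
  have e5 : (1:ℝ)+(d:ℝ) ≠ 0 := by have : (0:ℝ) ≤ d := Nat.cast_nonneg d; linarith
  have e6 : (1:ℝ)+(t:ℝ) ≠ 0 := by have : (0:ℝ) ≤ t := Nat.cast_nonneg t; linarith
  field_simp
  ring

lemma jcf_A (ha : 0 < a + 1) (hb : 0 ≤ b) :
    jcf (a+1) b (t+1+d+1) (t+1)
      = (a+(t:ℝ)+d+3)*(b+(t:ℝ)+d+2)/((a+(t:ℝ)+2)*(1+(d:ℝ))*(1+(t:ℝ))*(b+(d:ℝ)+1)) * Kf a b t d := by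
  unfold jcf Kf
  rw [show t+1+d+1 - (t+1) = d+1 from by omega]
  push_cast
  rw [show a + 1 + ((t:ℝ) + 1 + (d:ℝ) + 1) + 1 = (a+(t:ℝ)+(d:ℝ)+3)+1 from by ring,
      gamma_step _ (pos_tda a t d ha),
      show a + 1 + ((t:ℝ) + 1) + 1 = (a+(t:ℝ)+2)+1 from by ring,
      gamma_step _ (pos_ta a t ha),
      show b + ((t:ℝ) + 1 + (d:ℝ) + 1) + 1 = (b+(t:ℝ)+(d:ℝ)+2)+1 from by ring,
      gamma_step _ (pos_tdb b t d hb),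
      show b + ((d:ℝ) + 1) + 1 = (b+(d:ℝ)+1)+1 from by ring,
      gamma_step _ (pos_db b d hb), fact_cast d, fact_cast t]
  have e1 := gamma_ne _ (pos_ta a t ha)
  have e2 := gamma_ne _ (pos_db b d hb)
  have e3 := fact_ne d
  have e4 := fact_ne t
  have e5 : (1:ℝ)+(d:ℝ) ≠ 0 := by have : (0:ℝ) ≤ d := Nat.cast_nonneg d; linarith
  have e6 : (1:ℝ)+(t:ℝ) ≠ 0 := by have : (0:ℝ) ≤ t := Nat.cast_nonneg t; linarith
  have e7 : a+(t:ℝ)+2 ≠ 0 := (pos_ta a t ha).ne'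
  field_simp
  ring

lemma jcf_V (ha : 0 < a + 1) (hb : 0 ≤ b) :
    jcf (a+1) b (t+1+d) (t+1)
      = 1/((a+(t:ℝ)+2)*(1+(t:ℝ))) * Kf a b t d := by
  unfold jcf Kf
  rw [show t+1+d - (t+1) = d from by omega]
  push_cast
  rw [show a + 1 + ((t:ℝ) + 1 + (d:ℝ)) + 1 = a+(t:ℝ)+(d:ℝ)+3 from by ring,
      show a + 1 + ((t:ℝ) + 1) + 1 = (a+(t:ℝ)+2)+1 from by ring,
      gamma_step _ (pos_ta a t ha),
      show b + ((t:ℝ) + 1 + (d:ℝ)) + 1 = b+(t:ℝ)+(d:ℝ)+2 from by ring,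
      show b + (d:ℝ) + 1 = b+(d:ℝ)+1 from by ring, fact_cast t]
  have e1 := gamma_ne _ (pos_ta a t ha)
  have e2 := gamma_ne _ (pos_db b d hb)
  have e3 := fact_ne d
  have e4 := fact_ne t
  have e6 : (1:ℝ)+(t:ℝ) ≠ 0 := by have : (0:ℝ) ≤ t := Nat.cast_nonneg t; linarith
  have e7 : a+(t:ℝ)+2 ≠ 0 := (pos_ta a t ha).ne'
  field_simp
  ring_nf
lemma jcf_W (ha : 0 < a + 1) (hb : 0 ≤ b) :
    jcf (a+1) b (t+1+d) t
      = 1/((1+(d:ℝ))*(b+(d:ℝ)+1)) * Kf a b t d := by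
  unfold jcf Kf
  rw [show t+1+d - t = d+1 from by omega]
  push_cast
  rw [show a + 1 + ((t:ℝ) + 1 + (d:ℝ)) + 1 = a+(t:ℝ)+(d:ℝ)+3 from by ring,
      show a + 1 + (t:ℝ) + 1 = a+(t:ℝ)+2 from by ring,
      show b + ((t:ℝ) + 1 + (d:ℝ)) + 1 = b+(t:ℝ)+(d:ℝ)+2 from by ring,
      show b + ((d:ℝ) + 1) + 1 = (b+(d:ℝ)+1)+1 from by ring,
      gamma_step _ (pos_db b d hb), fact_cast d]
  have e1 := gamma_ne _ (pos_ta a t ha)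
  have e2 := gamma_ne _ (pos_db b d hb)
  have e3 := fact_ne d
  have e4 := fact_ne t
  have e5 : (1:ℝ)+(d:ℝ) ≠ 0 := by have : (0:ℝ) ≤ d := Nat.cast_nonneg d; linarith
  field_simp
  ring_nf
lemma coeff_mid (ha : 0 < a + 1) (hb : 0 ≤ b) :
    (2*((t:ℝ)+1+d)+a+b+3) * jcf a b (t+1+d+1) (t+1)
      = ((t:ℝ)+1+d+a+b+2) * jcf (a+1) b (t+1+d+1) (t+1)
        - ((t:ℝ)+1+d+1+b) * jcf (a+1) b (t+1+d) (t+1)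
        + ((t:ℝ)+1+d+1+b) * jcf (a+1) b (t+1+d) t := by
  rw [jcf_L a b t d ha hb, jcf_A a b t d ha hb, jcf_V a b t d ha hb, jcf_W a b t d ha hb]
  have e5 : (1:ℝ)+(d:ℝ) ≠ 0 := by have : (0:ℝ) ≤ d := Nat.cast_nonneg d; linarith
  have e6 : (1:ℝ)+(t:ℝ) ≠ 0 := by have : (0:ℝ) ≤ t := Nat.cast_nonneg t; linarith
  have e7 : a+(t:ℝ)+2 ≠ 0 := (pos_ta a t ha).ne'
  have e8 : b+(d:ℝ)+1 ≠ 0 := (pos_db b d hb).ne'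
  have hc : (2*((t:ℝ)+1+d)+a+b+3) * ((b+(t:ℝ)+d+2)/((1+(d:ℝ))*(1+(t:ℝ))*(b+(d:ℝ)+1)))
      = ((t:ℝ)+1+d+a+b+2) * ((a+(t:ℝ)+d+3)*(b+(t:ℝ)+d+2)/((a+(t:ℝ)+2)*(1+(d:ℝ))*(1+(t:ℝ))*(b+(d:ℝ)+1)))
        - ((t:ℝ)+1+d+1+b) * (1/((a+(t:ℝ)+2)*(1+(t:ℝ))))
        + ((t:ℝ)+1+d+1+b) * (1/((1+(d:ℝ))*(b+(d:ℝ)+1))) := by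
    field_simp
    ring
  linear_combination Kf a b t d * hc

lemma fact0 : ((Nat.factorial 0 : ℕ) : ℝ) = 1 := by norm_num [Nat.factorial]

lemma coeff_s0 (a b : ℝ) (n : ℕ) (ha : 0 < a + 1) (hb : 0 ≤ b) :
    (2*(n:ℝ)+a+b+3) * jcf a b (n+1) 0
      = ((n:ℝ)+a+b+2) * jcf (a+1) b (n+1) 0 - ((n:ℝ)+1+b) * jcf (a+1) b n 0 := by
  have hn0 : (0:ℝ) ≤ n := Nat.cast_nonneg n
  have pan : (0:ℝ) < a+(n:ℝ)+2 := by linarith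
  have pbn1 : (0:ℝ) < b+(n:ℝ)+1 := by linarith
  have pbn2 : (0:ℝ) < b+(n:ℝ)+2 := by linarith
  unfold jcf
  rw [Nat.sub_zero, Nat.sub_zero]
  push_cast
  rw [show a + ((n:ℝ)+1) + 1 = a+(n:ℝ)+2 from by ring,
      show a + 0 + 1 = a + 1 from by ring,
      show a + 1 + ((n:ℝ)+1) + 1 = (a+(n:ℝ)+2)+1 from by ring, gamma_step _ pan,
      show a + 1 + 0 + 1 = (a+1)+1 from by ring, gamma_step _ ha,
      show a + 1 + (n:ℝ) + 1 = a+(n:ℝ)+2 from by ring,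
      show b + ((n:ℝ)+1) + 1 = b+(n:ℝ)+2 from by ring,
      fact_cast n, fact0]
  have e1 := gamma_ne _ ha
  have e2 := gamma_ne _ pan
  have e3 := gamma_ne _ pbn1
  have e4 := gamma_ne _ pbn2
  have e5 := fact_ne n
  have e6 : (n:ℝ)+1 ≠ 0 := by linarith
  have e7 : a+1 ≠ 0 := ha.ne'
  field_simp
  ring

lemma coeff_top (a b : ℝ) (n : ℕ) (ha : 0 < a + 1) (hb : 0 ≤ b) :
    (2*(n:ℝ)+a+b+3) * jcf a b (n+1) (n+1)
      = ((n:ℝ)+a+b+2) * jcf (a+1) b (n+1) (n+1) + ((n:ℝ)+1+b) * jcf (a+1) b n n := by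
  have hn0 : (0:ℝ) ≤ n := Nat.cast_nonneg n
  have pan : (0:ℝ) < a+(n:ℝ)+2 := by linarith
  have pan3 : (0:ℝ) < a+(n:ℝ)+3 := by linarith
  have pbn1 : (0:ℝ) < b+(n:ℝ)+1 := by linarith
  have pb1 : (0:ℝ) < b+1 := by linarith
  unfold jcf
  rw [Nat.sub_self, Nat.sub_self]
  push_cast
  rw [show a + ((n:ℝ)+1) + 1 = a+(n:ℝ)+2 from by ring,
      show a + 1 + ((n:ℝ)+1) + 1 = a+(n:ℝ)+3 from by ring,
      show a + 1 + (n:ℝ) + 1 = a+(n:ℝ)+2 from by ring,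
      show b + ((n:ℝ)+1) + 1 = (b+(n:ℝ)+1)+1 from by ring, gamma_step _ pbn1,
      show b + 0 + 1 = b+1 from by ring,
      fact_cast n, fact0]
  have e2 := gamma_ne _ pan
  have e2b := gamma_ne _ pan3
  have e3 := gamma_ne _ pbn1
  have e4 := gamma_ne _ pb1
  have e5 := fact_ne n
  have e6 : (n:ℝ)+1 ≠ 0 := by linarith
  field_simp
  ring
lemma jacobiP_eq (a b : ℝ) (n : ℕ) (x : ℝ) :
    jacobiP a b n x = ∑ s ∈ Finset.range (n + 1),
      jcf a b n s * ((x - 1) / 2) ^ s * ((x + 1) / 2) ^ (n - s) := rfl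

def Wf (a b u v : ℝ) (n : ℕ) : ℕ → ℝ
  | 0 => 0
  | (t+1) => ((n:ℝ)+1+b) * jcf (a+1) b n t * u^(t+1) * v^(n-t)

lemma jacobi_step (a b : ℝ) (ha : 0 < a + 1) (hb : 0 ≤ b) (n : ℕ) (x : ℝ) :
    (2*(n:ℝ)+a+b+3) * jacobiP a b (n+1) x
      = ((n:ℝ)+a+b+2) * jacobiP (a+1) b (n+1) x - ((n:ℝ)+1+b) * jacobiP (a+1) b n x := by
  set u := (x-1)/2 with hu
  set v := (x+1)/2 with hv0
  have hv : v = u + 1 := by rw [hu, hv0]; ring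
  rw [jacobiP_eq, jacobiP_eq, jacobiP_eq, Finset.mul_sum, Finset.mul_sum, Finset.mul_sum]
  -- abbreviations
  set L : ℕ → ℝ := fun s => (2*(n:ℝ)+a+b+3) * (jcf a b (n+1) s * u^s * v^(n+1-s)) with hL
  set A : ℕ → ℝ := fun s => ((n:ℝ)+a+b+2) * (jcf (a+1) b (n+1) s * u^s * v^(n+1-s)) with hA
  set F : ℕ → ℝ := fun s => ((n:ℝ)+1+b) * (jcf (a+1) b n s * u^s * v^(n+1-s)) with hF
  set W : ℕ → ℝ := Wf a b u v n with hW
  -- third sum transformation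
  have h3 : ∑ s ∈ Finset.range (n+1), ((n:ℝ)+1+b) * (jcf (a+1) b n s * u^s * v^(n-s))
      = (∑ s ∈ Finset.range (n+2), F s - F (n+1)) - ∑ s ∈ Finset.range (n+2), W s := by
    have e1 : ∑ s ∈ Finset.range (n+2), W s
        = ∑ s ∈ Finset.range (n+1), ((n:ℝ)+1+b) * jcf (a+1) b n s * u^(s+1) * v^(n-s) := by
      rw [Finset.sum_range_succ' W (n+1)]
      simp [hW, Wf]
    have e2 : ∑ s ∈ Finset.range (n+2), F s - F (n+1) = ∑ s ∈ Finset.range (n+1), F s := by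
      rw [Finset.sum_range_succ]; ring
    rw [e1, e2, ← Finset.sum_sub_distrib]
    refine Finset.sum_congr rfl (fun s hs => ?_)
    have hsn : s ≤ n := Nat.lt_succ_iff.mp (Finset.mem_range.mp hs)
    have hns : n+1-s = (n-s)+1 := by omega
    rw [hF]
    simp only []
    rw [hns, pow_succ, hv]
    ring
  rw [h3]
  -- termwise identities
  have key : ∀ s ∈ Finset.range (n+1), L s = A s - F s + W s := by
    intro s hs
    have hsn : s ≤ n := Nat.lt_succ_iff.mp (Finset.mem_range.mp hs)
    match s with
    | 0 =>
      have hc := coeff_s0 a b n ha hb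
      simp only [hL, hA, hF, hW, Wf, Nat.sub_zero, pow_zero]
      linear_combination v^(n+1) * hc
    | (t+1) =>
      obtain ⟨d, rfl⟩ : ∃ d, n = t+1+d := ⟨n - (t+1), by omega⟩
      have hc := coeff_mid a b t d ha hb
      simp only [hL, hA, hF, hW, Wf]
      rw [show t+1+d+1 - (t+1) = d+1 from by omega,
          show t+1+d - t = d+1 from by omega]
      push_cast
      linear_combination (u^(t+1) * v^(d+1)) * hc
  have top : L (n+1) = A (n+1) + W (n+1) := by
    have hc := coeff_top a b n ha hb
    simp only [hL, hA, hW, Wf]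
    simp only [Nat.sub_self, pow_zero]
    linear_combination u^(n+1) * hc
  have hF2 : ∑ s ∈ Finset.range (n+2), F s = ∑ s ∈ Finset.range (n+1), F s + F (n+1) :=
    Finset.sum_range_succ F (n+1)
  have hW2 : ∑ s ∈ Finset.range (n+2), W s = ∑ s ∈ Finset.range (n+1), W s + W (n+1) :=
    Finset.sum_range_succ W (n+1)
  rw [Finset.sum_range_succ L, Finset.sum_range_succ A,
      Finset.sum_congr rfl key, top, hF2, hW2, Finset.sum_add_distrib, Finset.sum_sub_distrib]
  ring
end

lemma jacobiP_zero (a b : ℝ) (ha : 0 < a + 1) (hb : 0 < b + 1) (x : ℝ) :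
    jacobiP a b 0 x = 1 := by
  simp [jacobiP]
  rw [div_self (gamma_ne _ ha), div_self (gamma_ne _ hb)]
  ring


/-- **Parameter-raising expansion.** For `α > −1` and `m, n ∈ ℕ₀`,
`(m+n+α+1) P^α_{m,n} = [(m+α+1)(n+α+1)/(α+1)] P^{α+1}_{m,n} − [mn/(α+1)] P^{α+1}_{m−1,n−1}`
on the unit disk, with `P^{α+1}_{m−1,n−1} ≡ 0` when `m = 0` or `n = 0`. -/
theorem zernike_parameter_raise (a : ℝ) (ha : -1 < a) (m n : ℕ) :
    ∀ x ∈ Metric.ball (0 : E 2) 1,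
      ((((m : ℝ) + n + a + 1) : ℝ) : ℂ) * zern a m n x =
        ((((m + a + 1) * ((n : ℝ) + a + 1) / (a + 1)) : ℝ) : ℂ) * zern (a + 1) m n x -
          ((((m : ℝ) * n / (a + 1)) : ℝ) : ℂ) *
            (if m = 0 ∨ n = 0 then 0 else zern (a + 1) (m - 1) (n - 1) x) := by
  intro x _
  have ha1 : (0:ℝ) < a + 1 := by linarith
  have hane : ((a:ℂ)+1) ≠ 0 := by exact_mod_cast ha1.ne'
  by_cases h0 : m = 0 ∨ n = 0
  · rw [if_pos h0, mul_zero, sub_zero]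
    have hmin : min m n = 0 := by omega
    unfold zern
    rw [hmin]
    have hb : (0:ℝ) < ((max m n - 0 : ℕ) : ℝ) + 1 := by positivity
    rw [jacobiP_zero a _ ha1 hb, jacobiP_zero (a+1) _ (by linarith) hb]
    push_cast
    rw [show (0:ℝ)+1 = 1 from by ring, Real.Gamma_one,
        show (0:ℝ)+a+1 = a+1 from by ring,
        show (0:ℝ)+(a+1)+1 = a+1+1 from by ring]
    have g1 : ((Real.Gamma (a+1) : ℝ) : ℂ) ≠ 0 := Complex.ofReal_ne_zero.2 (gamma_ne _ ha1)
    have g2 : ((Real.Gamma (a+1+1) : ℝ) : ℂ) ≠ 0 :=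
      Complex.ofReal_ne_zero.2 (gamma_ne _ (by linarith : (0:ℝ) < a+1+1))
    rcases h0 with rfl | rfl
    · push_cast
      field_simp
      ring
    · push_cast
      field_simp
      ring
  · push_neg at h0
    obtain ⟨m', rfl⟩ := Nat.exists_eq_succ_of_ne_zero h0.1
    obtain ⟨n', rfl⟩ := Nat.exists_eq_succ_of_ne_zero h0.2
    rw [if_neg (by push_neg; omega)]
    rw [show m'+1-1 = m' from rfl, show n'+1-1 = n' from rfl]
    rcases le_or_gt (n'+1) (m'+1) with hnm | hnm
    · -- n ≤ m : min = n'+1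
      have hnm' : n' ≤ m' := by omega
      have hmin : min (m'+1) (n'+1) = n'+1 := by omega
      have hmax : max (m'+1) (n'+1) = m'+1 := by omega
      have hmin' : min m' n' = n' := by omega
      have hmax' : max m' n' = m' := by omega
      unfold zern
      rw [hmin, hmax, hmin', hmax', if_pos hnm, if_pos hnm',
          show m'+1 - (n'+1) = m' - n' from by omega]
      have hcast : ((m'-n' : ℕ) : ℝ) = (m' : ℝ) - n' := Nat.cast_sub hnm'
      have hbb : (0:ℝ) ≤ (m':ℝ) - n' := by
        rw [← hcast]; positivity
      have hstep := jacobi_step a ((m':ℝ) - n') ha1 hbb n' (2 * ‖x‖ ^ 2 - 1)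
      set t := 2 * ‖x‖ ^ 2 - 1
      have hR : ((m'+1:ℝ) + (n'+1:ℝ) + a + 1) *
            (Real.Gamma ((n':ℝ)+1+1) * Real.Gamma (a+1) / Real.Gamma ((n':ℝ)+1+a+1) *
              jacobiP a ((m':ℝ)-n') (n'+1) t)
          = (((m'+1:ℝ)+a+1) * ((n'+1:ℝ)+a+1) / (a+1)) *
              (Real.Gamma ((n':ℝ)+1+1) * Real.Gamma (a+1+1) / Real.Gamma ((n':ℝ)+1+(a+1)+1) *
                jacobiP (a+1) ((m':ℝ)-n') (n'+1) t)
            - ((m'+1:ℝ) * (n'+1:ℝ) / (a+1)) *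
              (Real.Gamma ((n':ℝ)+1) * Real.Gamma (a+1+1) / Real.Gamma ((n':ℝ)+(a+1)+1) *
                jacobiP (a+1) ((m':ℝ)-n') n' t) := by
        have hn0 : (0:ℝ) ≤ n' := Nat.cast_nonneg n'
        have p1 : (0:ℝ) < (n':ℝ)+1 := by linarith
        have p2 : (0:ℝ) < (n':ℝ)+a+2 := by linarith
        have e1 : ((m'+1:ℝ) + (n'+1:ℝ) + a + 1) *
              (Real.Gamma ((n':ℝ)+1+1) * Real.Gamma (a+1) / Real.Gamma ((n':ℝ)+1+a+1))
            = (2*(n':ℝ) + a + ((m':ℝ) - n') + 3) *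
              (((n':ℝ)+1) * Real.Gamma ((n':ℝ)+1) * Real.Gamma (a+1) / Real.Gamma ((n':ℝ)+a+2)) := by
          rw [show (n':ℝ)+1+1 = ((n':ℝ)+1)+1 from by ring, gamma_step _ p1,
              show (n':ℝ)+1+a+1 = (n':ℝ)+a+2 from by ring]
          have hmn2 : (m':ℝ) = (n':ℝ) + ((m':ℝ) - n') := by ring
          field_simp
          ring
        have e2 : (((m'+1:ℝ)+a+1) * ((n'+1:ℝ)+a+1) / (a+1)) *
              (Real.Gamma ((n':ℝ)+1+1) * Real.Gamma (a+1+1) / Real.Gamma ((n':ℝ)+1+(a+1)+1))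
            = ((n':ℝ) + a + ((m':ℝ) - n') + 2) *
              (((n':ℝ)+1) * Real.Gamma ((n':ℝ)+1) * Real.Gamma (a+1) / Real.Gamma ((n':ℝ)+a+2)) := by
          rw [show (n':ℝ)+1+1 = ((n':ℝ)+1)+1 from by ring, gamma_step _ p1,
              show (n':ℝ)+1+(a+1)+1 = ((n':ℝ)+a+2)+1 from by ring, gamma_step _ p2,
              gamma_step _ ha1]
          have g2 := gamma_ne _ p2
          field_simp
          ring
        have e3 : ((m'+1:ℝ) * (n'+1:ℝ) / (a+1)) *
              (Real.Gamma ((n':ℝ)+1) * Real.Gamma (a+1+1) / Real.Gamma ((n':ℝ)+(a+1)+1))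
            = ((n':ℝ) + 1 + ((m':ℝ) - n')) *
              (((n':ℝ)+1) * Real.Gamma ((n':ℝ)+1) * Real.Gamma (a+1) / Real.Gamma ((n':ℝ)+a+2)) := by
          rw [show (n':ℝ)+(a+1)+1 = (n':ℝ)+a+2 from by ring, gamma_step _ ha1]
          have g2 := gamma_ne _ p2
          field_simp
          ring
        set cA := ((n':ℝ)+1) * Real.Gamma ((n':ℝ)+1) * Real.Gamma (a+1) / Real.Gamma ((n':ℝ)+a+2) with hcA
        calc ((m'+1:ℝ) + (n'+1:ℝ) + a + 1) *
              (Real.Gamma ((n':ℝ)+1+1) * Real.Gamma (a+1) / Real.Gamma ((n':ℝ)+1+a+1) *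
                jacobiP a ((m':ℝ)-(n':ℝ)) (n'+1) t)
            = (((m'+1:ℝ) + (n'+1:ℝ) + a + 1) *
                (Real.Gamma ((n':ℝ)+1+1) * Real.Gamma (a+1) / Real.Gamma ((n':ℝ)+1+a+1))) *
                jacobiP a ((m':ℝ)-(n':ℝ)) (n'+1) t := by ring
          _ = cA * ((2*(n':ℝ) + a + ((m':ℝ) - n') + 3) *
                jacobiP a ((m':ℝ)-(n':ℝ)) (n'+1) t) := by rw [e1]; ring
          _ = cA * (((n':ℝ) + a + ((m':ℝ) - n') + 2) *
                  jacobiP (a+1) ((m':ℝ)-(n':ℝ)) (n'+1) t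
                - ((n':ℝ) + 1 + ((m':ℝ) - n')) *
                  jacobiP (a+1) ((m':ℝ)-(n':ℝ)) n' t) := by rw [hstep]
          _ = (((n':ℝ) + a + ((m':ℝ) - n') + 2) * cA) *
                  jacobiP (a+1) ((m':ℝ)-(n':ℝ)) (n'+1) t
                - (((n':ℝ) + 1 + ((m':ℝ) - n')) * cA) *
                  jacobiP (a+1) ((m':ℝ)-(n':ℝ)) n' t := by ring
          _ = _ := by rw [← e2, ← e3]; ring
      have hC := congrArg (fun r : ℝ => (r:ℂ)) hR
      push_cast at hC ⊢
      rw [hcast]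
      linear_combination ((x 0 : ℂ) + (x 1 : ℂ) * Complex.I) ^ (m' - n') * hC
    · -- m < n : min = m'+1
      have hnm' : ¬ (n' ≤ m') := by omega
      have hmn' : m' ≤ n' := by omega
      have hmin : min (m'+1) (n'+1) = m'+1 := by omega
      have hmax : max (m'+1) (n'+1) = n'+1 := by omega
      have hmin' : min m' n' = m' := by omega
      have hmax' : max m' n' = n' := by omega
      unfold zern
      rw [hmin, hmax, hmin', hmax', if_neg (by omega), if_neg hnm',
          show n'+1 - (m'+1) = n' - m' from by omega]
      have hcast : ((n'-m' : ℕ) : ℝ) = (n' : ℝ) - m' := Nat.cast_sub hmn'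
      have hbb : (0:ℝ) ≤ (n':ℝ) - m' := by
        rw [← hcast]; positivity
      have hstep := jacobi_step a ((n':ℝ) - m') ha1 hbb m' (2 * ‖x‖ ^ 2 - 1)
      set t := 2 * ‖x‖ ^ 2 - 1
      have hR : ((m'+1:ℝ) + (n'+1:ℝ) + a + 1) *
            (Real.Gamma ((m':ℝ)+1+1) * Real.Gamma (a+1) / Real.Gamma ((m':ℝ)+1+a+1) *
              jacobiP a ((n':ℝ)-m') (m'+1) t)
          = (((m'+1:ℝ)+a+1) * ((n'+1:ℝ)+a+1) / (a+1)) *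
              (Real.Gamma ((m':ℝ)+1+1) * Real.Gamma (a+1+1) / Real.Gamma ((m':ℝ)+1+(a+1)+1) *
                jacobiP (a+1) ((n':ℝ)-m') (m'+1) t)
            - ((m'+1:ℝ) * (n'+1:ℝ) / (a+1)) *
              (Real.Gamma ((m':ℝ)+1) * Real.Gamma (a+1+1) / Real.Gamma ((m':ℝ)+(a+1)+1) *
                jacobiP (a+1) ((n':ℝ)-m') m' t) := by
        have hn0 : (0:ℝ) ≤ m' := Nat.cast_nonneg m'
        have p1 : (0:ℝ) < (m':ℝ)+1 := by linarith
        have p2 : (0:ℝ) < (m':ℝ)+a+2 := by linarith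
        have e1 : ((m'+1:ℝ) + (n'+1:ℝ) + a + 1) *
              (Real.Gamma ((m':ℝ)+1+1) * Real.Gamma (a+1) / Real.Gamma ((m':ℝ)+1+a+1))
            = (2*(m':ℝ) + a + ((n':ℝ) - m') + 3) *
              (((m':ℝ)+1) * Real.Gamma ((m':ℝ)+1) * Real.Gamma (a+1) / Real.Gamma ((m':ℝ)+a+2)) := by
          rw [show (m':ℝ)+1+1 = ((m':ℝ)+1)+1 from by ring, gamma_step _ p1,
              show (m':ℝ)+1+a+1 = (m':ℝ)+a+2 from by ring]
          have hmn2 : (n':ℝ) = (m':ℝ) + ((n':ℝ) - m') := by ring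
          field_simp
          ring
        have e2 : (((m'+1:ℝ)+a+1) * ((n'+1:ℝ)+a+1) / (a+1)) *
              (Real.Gamma ((m':ℝ)+1+1) * Real.Gamma (a+1+1) / Real.Gamma ((m':ℝ)+1+(a+1)+1))
            = ((m':ℝ) + a + ((n':ℝ) - m') + 2) *
              (((m':ℝ)+1) * Real.Gamma ((m':ℝ)+1) * Real.Gamma (a+1) / Real.Gamma ((m':ℝ)+a+2)) := by
          rw [show (m':ℝ)+1+1 = ((m':ℝ)+1)+1 from by ring, gamma_step _ p1,
              show (m':ℝ)+1+(a+1)+1 = ((m':ℝ)+a+2)+1 from by ring, gamma_step _ p2,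
              gamma_step _ ha1]
          have g2 := gamma_ne _ p2
          field_simp
          ring
        have e3 : ((m'+1:ℝ) * (n'+1:ℝ) / (a+1)) *
              (Real.Gamma ((m':ℝ)+1) * Real.Gamma (a+1+1) / Real.Gamma ((m':ℝ)+(a+1)+1))
            = ((m':ℝ) + 1 + ((n':ℝ) - m')) *
              (((m':ℝ)+1) * Real.Gamma ((m':ℝ)+1) * Real.Gamma (a+1) / Real.Gamma ((m':ℝ)+a+2)) := by
          rw [show (m':ℝ)+(a+1)+1 = (m':ℝ)+a+2 from by ring, gamma_step _ ha1]
          have g2 := gamma_ne _ p2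
          field_simp
          ring
        set cA := ((m':ℝ)+1) * Real.Gamma ((m':ℝ)+1) * Real.Gamma (a+1) / Real.Gamma ((m':ℝ)+a+2) with hcA
        calc ((m'+1:ℝ) + (n'+1:ℝ) + a + 1) *
              (Real.Gamma ((m':ℝ)+1+1) * Real.Gamma (a+1) / Real.Gamma ((m':ℝ)+1+a+1) *
                jacobiP a ((n':ℝ)-(m':ℝ)) (m'+1) t)
            = (((m'+1:ℝ) + (n'+1:ℝ) + a + 1) *
                (Real.Gamma ((m':ℝ)+1+1) * Real.Gamma (a+1) / Real.Gamma ((m':ℝ)+1+a+1))) *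
                jacobiP a ((n':ℝ)-(m':ℝ)) (m'+1) t := by ring
          _ = cA * ((2*(m':ℝ) + a + ((n':ℝ) - m') + 3) *
                jacobiP a ((n':ℝ)-(m':ℝ)) (m'+1) t) := by rw [e1]; ring
          _ = cA * (((m':ℝ) + a + ((n':ℝ) - m') + 2) *
                  jacobiP (a+1) ((n':ℝ)-(m':ℝ)) (m'+1) t
                - ((m':ℝ) + 1 + ((n':ℝ) - m')) *
                  jacobiP (a+1) ((n':ℝ)-(m':ℝ)) m' t) := by rw [hstep]
          _ = (((m':ℝ) + a + ((n':ℝ) - m') + 2) * cA) *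
                  jacobiP (a+1) ((n':ℝ)-(m':ℝ)) (m'+1) t
                - (((m':ℝ) + 1 + ((n':ℝ) - m')) * cA) *
                  jacobiP (a+1) ((n':ℝ)-(m':ℝ)) m' t := by ring
          _ = _ := by rw [← e2, ← e3]; ring
      have hC := congrArg (fun r : ℝ => (r:ℂ)) hR
      push_cast at hC ⊢
      rw [hcast]
      linear_combination ((x 0 : ℂ) - (x 1 : ℂ) * Complex.I) ^ (n' - m') * hC
end
end

section
/- Let α > −1 and let m, n be nonnegative integers. Then the same-parameter expansions with respect to first-order derivatives hold as identities of functions on the unit disk: (m + n + α + 1) · P^α_{m,n} = [(n + α + 1)/(n + 1)] · ∂_{z̄} P^α_{m,n+1} − [m/(m + α)] · ∂_{z̄} P^α_{m−1, n}, and (m + n + α + 1) · P^α_{m,n} = [(m + α + 1)/(m + 1)] · ∂_z P^α_{m+1,n} − [n/(n + α)] · ∂_z P^α_{m,n−1}, where any term whose Zernike index is negative is zero (in particular the coefficient m/(m+α), resp. n/(n+α), is interpreted as 0 when m = 0, resp. n = 0). -/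
open MeasureTheory

noncomputable section

/-- The Wirtinger derivative `∂_z̄ f = (∂₁ f + i ∂₂ f)/2` (classical derivatives). -/
def dzbar (f : E 2 → ℂ) (x : E 2) : ℂ :=
  (fderiv ℝ f x (EuclideanSpace.single 0 1) + Complex.I * fderiv ℝ f x (EuclideanSpace.single 1 1)) / 2

/-- The Wirtinger derivative `∂_z f = (∂₁ f − i ∂₂ f)/2` (classical derivatives). -/
def dz (f : E 2 → ℂ) (x : E 2) : ℂ :=
  (fderiv ℝ f x (EuclideanSpace.single 0 1) - Complex.I * fderiv ℝ f x (EuclideanSpace.single 1 1)) / 2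


open Finset

namespace ZD

def UL : E 2 →L[ℝ] ℂ :=
  (Complex.ofRealCLM.comp (EuclideanSpace.proj (0 : Fin 2))) +
    (EuclideanSpace.proj (1 : Fin 2)).smulRight Complex.I

def VL : E 2 →L[ℝ] ℂ :=
  (Complex.ofRealCLM.comp (EuclideanSpace.proj (0 : Fin 2))) -
    (EuclideanSpace.proj (1 : Fin 2)).smulRight Complex.I

lemma UL_apply (x : E 2) : UL x = (x 0 : ℂ) + (x 1 : ℂ) * Complex.I := by
  simp [UL, Complex.real_smul]

lemma VL_apply (x : E 2) : VL x = (x 0 : ℂ) - (x 1 : ℂ) * Complex.I := by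
  simp [VL, Complex.real_smul]

lemma UL_mul_VL (x : E 2) : UL x * VL x = ((‖x‖ ^ 2 : ℝ) : ℂ) := by
  have : ‖x‖ ^ 2 = x 0 ^ 2 + x 1 ^ 2 := by
    rw [EuclideanSpace.norm_eq, Real.sq_sqrt (by positivity)]
    simp [Fin.sum_univ_two, sq]
  rw [this, UL_apply, VL_apply]
  push_cast
  ring_nf
  rw [Complex.I_sq]
  ring

lemma UL_e0 : UL (EuclideanSpace.single (0 : Fin 2) (1:ℝ)) = 1 := by
  rw [UL_apply]; simp
lemma UL_e1 : UL (EuclideanSpace.single (1 : Fin 2) (1:ℝ)) = Complex.I := by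
  rw [UL_apply]; simp
lemma VL_e0 : VL (EuclideanSpace.single (0 : Fin 2) (1:ℝ)) = 1 := by
  rw [VL_apply]; simp
lemma VL_e1 : VL (EuclideanSpace.single (1 : Fin 2) (1:ℝ)) = -Complex.I := by
  rw [VL_apply]; simp


def co (a : ℝ) (m n s : ℕ) : ℝ :=
  (m.choose s) * (n.choose s) * (s.factorial) * (Real.Gamma (a + 1) / Real.Gamma (a + s + 1))

lemma Gamma_pos (a : ℝ) (ha : -1 < a) (s : ℕ) : 0 < Real.Gamma (a + s + 1) :=
  Real.Gamma_pos_of_pos (by have := Nat.cast_nonneg (α := ℝ) s; linarith)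

lemma co_symm (a : ℝ) (m n s : ℕ) : co a m n s = co a n m s := by
  unfold co; ring

lemma co_zero (a : ℝ) (ha : -1 < a) (m n : ℕ) : co a m n 0 = 1 := by
  have h : Real.Gamma (a + (0:ℕ) + 1) = Real.Gamma (a + 1) := by norm_num
  have h2 : Real.Gamma (a + 1) ≠ 0 := by
    have := Real.Gamma_pos_of_pos (show (0:ℝ) < a + 1 by linarith); linarith
  unfold co
  rw [h, div_self h2]
  norm_num

lemma co_eq_zero_left (a : ℝ) {m s : ℕ} (n : ℕ) (h : m < s) : co a m n s = 0 := by
  simp [co, Nat.choose_eq_zero_of_lt h]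

lemma co_eq_zero_right (a : ℝ) {n s : ℕ} (m : ℕ) (h : n < s) : co a m n s = 0 := by
  simp [co, Nat.choose_eq_zero_of_lt h]

lemma co_R1 (a : ℝ) (ha : -1 < a) (m n s : ℕ) :
    co a m n (s + 1) * ((a + s + 1) * (s + 1)) = co a m n s * (((m - s : ℕ) : ℝ) * ((n - s : ℕ) : ℝ)) := by
  have h1 : Real.Gamma (a + (s+1 : ℕ) + 1) = (a + s + 1) * Real.Gamma (a + s + 1) := by
    push_cast
    have hA : a + (s:ℝ) + 1 ≠ 0 := by have := Nat.cast_nonneg (α := ℝ) s; intro h; linarith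
    have h2 : a + ((s:ℝ) + 1) + 1 = (a + s + 1) + 1 := by ring
    rw [h2, Real.Gamma_add_one hA]
  have hc1 : ((m.choose (s+1)) : ℝ) * (s+1) = ((m.choose s) : ℝ) * ((m - s : ℕ) : ℝ) := by
    have := Nat.choose_succ_right_eq m s
    exact_mod_cast congrArg (Nat.cast : ℕ → ℝ) this
  have hc2 : ((n.choose (s+1)) : ℝ) * (s+1) = ((n.choose s) : ℝ) * ((n - s : ℕ) : ℝ) := by
    have := Nat.choose_succ_right_eq n s
    exact_mod_cast congrArg (Nat.cast : ℕ → ℝ) this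
  have hfac : ((s+1).factorial : ℝ) = (s+1) * s.factorial := by
    rw [Nat.factorial_succ]; push_cast; ring
  have hΓ := (Gamma_pos a ha s).ne'
  have hA : a + (s:ℝ) + 1 ≠ 0 := by have := Nat.cast_nonneg (α := ℝ) s; intro h; linarith
  have expand : co a m n (s + 1) * ((a + s + 1) * (s + 1))
      = (((m.choose (s+1)) : ℝ) * (s+1)) * (((n.choose (s+1)) : ℝ) * (s+1)) * s.factorial *
        (Real.Gamma (a + 1) / Real.Gamma (a + s + 1)) := by
    unfold co
    rw [h1, hfac]
    field_simp
  rw [expand, hc1, hc2]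
  unfold co
  ring

lemma co_R2 (a : ℝ) (m n s : ℕ) :
    ((n + 1 - s : ℕ) : ℝ) * co a m (n + 1) s = ((n : ℝ) + 1) * co a m n s := by
  have h' : (((n+1).choose s) : ℝ) * ((n + 1 - s : ℕ) : ℝ) = ((n.choose s) : ℝ) * ((n:ℝ)+1) := by
    have := Nat.choose_mul_succ_eq n s
    exact_mod_cast (congrArg (Nat.cast : ℕ → ℝ) this).symm
  unfold co
  linear_combination (((m.choose s) : ℝ) * s.factorial * (Real.Gamma (a+1) / Real.Gamma (a + s + 1))) * h'

lemma zern_eq (a : ℝ) (ha : -1 < a) (m n : ℕ) (x : E 2) :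
    zern a m n x = ∑ s ∈ Finset.range (min m n + 1),
      ((co a m n s : ℝ) : ℂ) * (UL x ^ (m - s) * VL x ^ (n - s) * (UL x * VL x - 1) ^ s) := by
  have hUV : ((‖x‖ : ℝ) : ℂ)^2 = UL x * VL x := by
    rw [UL_mul_VL]; push_cast; ring
  have hΓa1 : Real.Gamma (a+1) ≠ 0 := (Real.Gamma_pos_of_pos (by linarith)).ne'
  have hΓs : ∀ k : ℕ, Real.Gamma (a + k + 1) ≠ 0 := fun k => (Gamma_pos a ha k).ne'
  unfold zern jacobiP
  rw [show ((2 * ‖x‖^2 - 1 - 1)/2 : ℝ) = ‖x‖^2 - 1 by ring,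
      show ((2 * ‖x‖^2 - 1 + 1)/2 : ℝ) = ‖x‖^2 by ring]
  rcases le_or_gt n m with hnm | hnm
  · have hmin : min m n = n := min_eq_right hnm
    have hmax : max m n = m := max_eq_left hnm
    rw [if_pos hnm, hmin, hmax]
    push_cast
    rw [Finset.mul_sum]
    apply Finset.sum_congr rfl
    intro s hs
    simp only [Finset.mem_range] at hs
    have hsn : s ≤ n := by omega
    have hco : co a m n s =
        (Real.Gamma ((n:ℝ)+1) * Real.Gamma (a+1) / Real.Gamma ((n:ℝ)+a+1)) *
        ((Real.Gamma (a+(n:ℝ)+1) / (Real.Gamma (a+(s:ℝ)+1) * ((n-s).factorial : ℝ))) *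
         (Real.Gamma (((m-n : ℕ):ℝ)+(n:ℝ)+1) / (Real.Gamma (((m-n:ℕ):ℝ)+((n-s:ℕ):ℝ)+1) * (s.factorial : ℝ)))) := by
      have e1 : Real.Gamma ((n:ℝ)+1) = (n.factorial : ℝ) := Real.Gamma_nat_eq_factorial n
      have e2 : Real.Gamma ((n:ℝ)+a+1) = Real.Gamma (a+(n:ℝ)+1) := by ring_nf
      have e3 : Real.Gamma (((m-n:ℕ):ℝ)+(n:ℝ)+1) = (m.factorial : ℝ) := by
        rw [show ((m-n:ℕ):ℝ)+(n:ℝ) = ((m : ℕ) : ℝ) by push_cast [Nat.cast_sub hnm]; ring]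
        exact Real.Gamma_nat_eq_factorial m
      have e4 : Real.Gamma (((m-n:ℕ):ℝ)+((n-s:ℕ):ℝ)+1) = ((m-s).factorial : ℝ) := by
        rw [show ((m-n:ℕ):ℝ)+((n-s:ℕ):ℝ) = ((m - s : ℕ) : ℝ) by
          push_cast [Nat.cast_sub hnm, Nat.cast_sub hsn, Nat.cast_sub (le_trans hsn hnm)]; ring]
        exact Real.Gamma_nat_eq_factorial (m - s)
      have e5 : ((m.choose s : ℕ) : ℝ) = (m.factorial : ℝ) / (s.factorial * (m - s).factorial) :=
        Nat.cast_choose ℝ (le_trans hsn hnm)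
      have e6 : ((n.choose s : ℕ) : ℝ) = (n.factorial : ℝ) / (s.factorial * (n - s).factorial) :=
        Nat.cast_choose ℝ hsn
      unfold co
      rw [e1, e2, e3, e4, e5, e6]
      have f1 : (s.factorial : ℝ) ≠ 0 := Nat.cast_ne_zero.2 s.factorial_ne_zero
      have f2 : ((m-s).factorial : ℝ) ≠ 0 := Nat.cast_ne_zero.2 (m-s).factorial_ne_zero
      have f3 : ((n-s).factorial : ℝ) ≠ 0 := Nat.cast_ne_zero.2 (n-s).factorial_ne_zero
      field_simp [hΓs n, hΓs s]
    rw [hco]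
    rw [← UL_apply, hUV]
    push_cast
    rw [show m - s = (m - n) + (n - s) from by omega]
    rw [pow_add]
    ring
  · have hmin : min m n = m := min_eq_left (le_of_lt hnm)
    have hmax : max m n = n := max_eq_right (le_of_lt hnm)
    rw [if_neg (by omega), hmin, hmax]
    push_cast
    rw [Finset.mul_sum]
    apply Finset.sum_congr rfl
    intro s hs
    simp only [Finset.mem_range] at hs
    have hsn : s ≤ m := by omega
    have hnm' : m ≤ n := le_of_lt hnm
    have hco : co a m n s =
        (Real.Gamma ((m:ℝ)+1) * Real.Gamma (a+1) / Real.Gamma ((m:ℝ)+a+1)) *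
        ((Real.Gamma (a+(m:ℝ)+1) / (Real.Gamma (a+(s:ℝ)+1) * ((m-s).factorial : ℝ))) *
         (Real.Gamma (((n-m : ℕ):ℝ)+(m:ℝ)+1) / (Real.Gamma (((n-m:ℕ):ℝ)+((m-s:ℕ):ℝ)+1) * (s.factorial : ℝ)))) := by
      have e1 : Real.Gamma ((m:ℝ)+1) = (m.factorial : ℝ) := Real.Gamma_nat_eq_factorial m
      have e2 : Real.Gamma ((m:ℝ)+a+1) = Real.Gamma (a+(m:ℝ)+1) := by ring_nf
      have e3 : Real.Gamma (((n-m:ℕ):ℝ)+(m:ℝ)+1) = (n.factorial : ℝ) := by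
        rw [show ((n-m:ℕ):ℝ)+(m:ℝ) = ((n : ℕ) : ℝ) by push_cast [Nat.cast_sub hnm']; ring]
        exact Real.Gamma_nat_eq_factorial n
      have e4 : Real.Gamma (((n-m:ℕ):ℝ)+((m-s:ℕ):ℝ)+1) = ((n-s).factorial : ℝ) := by
        rw [show ((n-m:ℕ):ℝ)+((m-s:ℕ):ℝ) = ((n - s : ℕ) : ℝ) by
          push_cast [Nat.cast_sub hnm', Nat.cast_sub hsn, Nat.cast_sub (le_trans hsn hnm')]; ring]
        exact Real.Gamma_nat_eq_factorial (n - s)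
      have e5 : ((m.choose s : ℕ) : ℝ) = (m.factorial : ℝ) / (s.factorial * (m - s).factorial) :=
        Nat.cast_choose ℝ hsn
      have e6 : ((n.choose s : ℕ) : ℝ) = (n.factorial : ℝ) / (s.factorial * (n - s).factorial) :=
        Nat.cast_choose ℝ (le_trans hsn hnm')
      unfold co
      rw [e1, e2, e3, e4, e5, e6]
      have f1 : (s.factorial : ℝ) ≠ 0 := Nat.cast_ne_zero.2 s.factorial_ne_zero
      have f2 : ((m-s).factorial : ℝ) ≠ 0 := Nat.cast_ne_zero.2 (m-s).factorial_ne_zero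
      have f3 : ((n-s).factorial : ℝ) ≠ 0 := Nat.cast_ne_zero.2 (n-s).factorial_ne_zero
      field_simp [hΓs m, hΓs s]
    rw [hco]
    rw [← VL_apply, hUV]
    push_cast
    rw [show n - s = (n - m) + (m - s) from by omega]
    rw [pow_add]
    ring

lemma co_min_zero (a : ℝ) {m n s : ℕ} (h : min m n < s) : co a m n s = 0 := by
  rcases Nat.lt_or_ge m s with h1 | h1
  · exact co_eq_zero_left a n h1
  · exact co_eq_zero_right a m (by omega)

lemma hasFDerivAt_pow' {f : E 2 → ℂ} {f' : E 2 →L[ℝ] ℂ} {x : E 2}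
    (h : HasFDerivAt f f' x) (p : ℕ) :
    HasFDerivAt (fun y => f y ^ p) ((p : ℂ) • f x ^ (p - 1) • f') x := by
  induction p with
  | zero =>
    have h0 : ((0:ℕ):ℂ) • f x ^ (0 - 1) • f' = 0 := by
      ext w
      simp
    rw [h0]
    simpa using hasFDerivAt_const (𝕜 := ℝ) (1:ℂ) x
  | succ p ih =>
    have h2 : HasFDerivAt (fun y => f y ^ p * f y)
        (f x ^ p • f' + f x • ((p:ℂ) • f x ^ (p-1) • f')) x := ih.mul h
    have hfe : (fun y => f y ^ p * f y) = fun y => f y ^ (p+1) := by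
      funext y; rw [pow_succ]
    rw [hfe] at h2
    convert h2 using 1
    rw [Nat.add_sub_cancel]
    cases p with
    | zero => ext w; simp
    | succ p' =>
      rw [Nat.add_sub_cancel]
      ext w
      simp only [ContinuousLinearMap.smul_apply, ContinuousLinearMap.add_apply, smul_eq_mul]
      push_cast
      ring

def monD (p q s : ℕ) (u v : ℂ) : E 2 →L[ℝ] ℂ :=
  (u ^ p * v ^ q) • ((s : ℂ) • (u * v - 1) ^ (s - 1) • (u • VL + v • UL)) +
  ((u * v - 1) ^ s) • ((u ^ p) • ((q : ℂ) • v ^ (q - 1) • VL) + (v ^ q) • ((p : ℂ) • u ^ (p - 1) • UL))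

lemma hasFDerivAt_mon (p q s : ℕ) (x : E 2) :
    HasFDerivAt (fun y => UL y ^ p * VL y ^ q * (UL y * VL y - 1) ^ s)
      (monD p q s (UL x) (VL x)) x := by
  have hU : HasFDerivAt (fun y : E 2 => UL y) UL x := UL.hasFDerivAt
  have hV : HasFDerivAt (fun y : E 2 => VL y) VL x := VL.hasFDerivAt
  have hW : HasFDerivAt (fun y : E 2 => UL y * VL y - 1) (UL x • VL + VL x • UL) x :=
    (hU.mul hV).sub_const 1
  exact ((hasFDerivAt_pow' hU p).mul (hasFDerivAt_pow' hV q)).mul (hasFDerivAt_pow' hW s)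

lemma monD_comb (p q s : ℕ) (u v : ℂ) :
    (monD p q s u v (EuclideanSpace.single 0 1) + Complex.I * monD p q s u v (EuclideanSpace.single 1 1)) / 2
    = (q:ℂ) * u^p * v^(q-1) * (u*v-1)^s + (s:ℂ) * u^(p+1) * v^q * (u*v-1)^(s-1) := by
  simp only [monD, ContinuousLinearMap.add_apply, ContinuousLinearMap.smul_apply,
    UL_e0, UL_e1, VL_e0, VL_e1, smul_eq_mul]
  rw [pow_succ]
  linear_combination (((u^p*v^q)*(s:ℂ)*(u*v-1)^(s-1)*(v-u)
    + (u*v-1)^s*((p:ℂ)*u^(p-1)*v^q - (q:ℂ)*u^p*v^(q-1)))/2) * Complex.I_sq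

lemma monD_comb' (p q s : ℕ) (u v : ℂ) :
    (monD p q s u v (EuclideanSpace.single 0 1) - Complex.I * monD p q s u v (EuclideanSpace.single 1 1)) / 2
    = (p:ℂ) * u^(p-1) * v^q * (u*v-1)^s + (s:ℂ) * u^p * v^(q+1) * (u*v-1)^(s-1) := by
  simp only [monD, ContinuousLinearMap.add_apply, ContinuousLinearMap.smul_apply,
    UL_e0, UL_e1, VL_e0, VL_e1, smul_eq_mul]
  rw [pow_succ]
  linear_combination (((u^p*v^q)*(s:ℂ)*(u*v-1)^(s-1)*(u-v)
    + (u*v-1)^s*((q:ℂ)*u^p*v^(q-1) - (p:ℂ)*u^(p-1)*v^q))/2) * Complex.I_sq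

def znsum (a : ℝ) (m n N : ℕ) (x : E 2) : ℂ :=
  ∑ s ∈ Finset.range N, ((co a m n s : ℝ) : ℂ) *
    (UL x ^ (m - s) * VL x ^ (n - s) * (UL x * VL x - 1) ^ s)

lemma zern_fun_eq (a : ℝ) (ha : -1 < a) (m n N : ℕ) (h : min m n < N) :
    zern a m n = znsum a m n N := by
  funext x
  rw [zern_eq a ha m n x, znsum]
  apply Finset.sum_subset (Finset.range_subset_range.2 (by omega))
  intro y hy hy2
  simp only [Finset.mem_range] at hy hy2
  rw [co_min_zero a (by omega)]
  simp

lemma hasFDerivAt_znsum (a : ℝ) (m n N : ℕ) (x : E 2) :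
    HasFDerivAt (znsum a m n N)
      (∑ s ∈ Finset.range N, ((co a m n s : ℝ) : ℂ) • monD (m - s) (n - s) s (UL x) (VL x)) x := by
  exact HasFDerivAt.fun_sum (fun s _ => (hasFDerivAt_mon (m-s) (n-s) s x).const_mul _)

lemma dzbar_znsum (a : ℝ) (m n N : ℕ) (x : E 2) :
    dzbar (znsum a m n N) x = ∑ s ∈ Finset.range N, ((co a m n s : ℝ) : ℂ) *
      (((n - s : ℕ) : ℂ) * UL x ^ (m - s) * VL x ^ (n - s - 1) * (UL x * VL x - 1) ^ s
        + (s : ℂ) * UL x ^ (m - s + 1) * VL x ^ (n - s) * (UL x * VL x - 1) ^ (s - 1)) := by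
  rw [dzbar, (hasFDerivAt_znsum a m n N x).fderiv]
  simp only [ContinuousLinearMap.sum_apply, ContinuousLinearMap.smul_apply, smul_eq_mul]
  rw [Finset.mul_sum, ← Finset.sum_add_distrib, Finset.sum_div]
  apply Finset.sum_congr rfl
  intro s _
  rw [show ∀ A B c : ℂ, (c * A + Complex.I * (c * B))/2 = c * ((A + Complex.I * B)/2) from
    fun A B c => by ring]
  rw [monD_comb]

lemma dz_znsum (a : ℝ) (m n N : ℕ) (x : E 2) :
    dz (znsum a m n N) x = ∑ s ∈ Finset.range N, ((co a m n s : ℝ) : ℂ) *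
      (((m - s : ℕ) : ℂ) * UL x ^ (m - s - 1) * VL x ^ (n - s) * (UL x * VL x - 1) ^ s
        + (s : ℂ) * UL x ^ (m - s) * VL x ^ (n - s + 1) * (UL x * VL x - 1) ^ (s - 1)) := by
  rw [dz, (hasFDerivAt_znsum a m n N x).fderiv]
  simp only [ContinuousLinearMap.sum_apply, ContinuousLinearMap.smul_apply, smul_eq_mul]
  rw [Finset.mul_sum, ← Finset.sum_sub_distrib, Finset.sum_div]
  apply Finset.sum_congr rfl
  intro s _
  rw [show ∀ A B c : ℂ, (c * A - Complex.I * (c * B))/2 = c * ((A - Complex.I * B)/2) from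
    fun A B c => by ring]
  rw [monD_comb']

def Acoef (a : ℝ) (m n : ℕ) (s : ℕ) : ℝ :=
  ((n + 1 - s : ℕ) : ℝ) * co a m (n+1) s + ((s:ℝ)+1) * co a m (n+1) (s+1)

def Ecoef (a : ℝ) (m n : ℕ) (s : ℕ) : ℝ :=
  ((n - s : ℕ) : ℝ) * co a (m-1) n s + ((s:ℝ)+1) * co a (m-1) n (s+1)

def Epcoef (a : ℝ) (m n : ℕ) : ℕ → ℝ
  | 0 => 0
  | (r+1) => Ecoef a m n r

lemma cast_ne (a : ℝ) (ha : -1 < a) (s : ℕ) : a + (s:ℝ) + 1 ≠ 0 := by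
  have := Nat.cast_nonneg (α := ℝ) s; intro h; linarith

lemma hA_identity (a : ℝ) (ha : -1 < a) (m n s : ℕ) :
    (a + s + 1) * Acoef a m n s
      = ((n:ℝ)+1) * ((a + s + 1) + ((m - s : ℕ):ℝ)) * co a m n s := by
  have hR2 := co_R2 a m n s
  have hR1 := co_R1 a ha m (n+1) s
  unfold Acoef
  linear_combination hR1 + ((a + (s:ℝ) + 1) + ((m - s : ℕ):ℝ)) * hR2

lemma hm_shift (a : ℝ) (m n s : ℕ) (hm : 1 ≤ m) :
    (m:ℝ) * co a (m-1) n s = ((m - s : ℕ):ℝ) * co a m n s := by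
  have h := co_R2 a n (m-1) s
  rw [Nat.sub_add_cancel hm] at h
  rw [co_symm a (m-1) n s, co_symm a m n s]
  have hc : ((m-1 : ℕ):ℝ) + 1 = (m:ℝ) := by
    push_cast [Nat.cast_sub hm]; ring
  rw [hc] at h
  linarith [h]

lemma hE (a : ℝ) (ha : -1 < a) (m n s : ℕ) (hm : 1 ≤ m) :
    (m:ℝ) * (a + s + 1) * Ecoef a m n s
      = ((m - s : ℕ):ℝ) * ((n - s : ℕ):ℝ) * (a + m) * co a m n s := by
  have hm1 := hm_shift a m n s hm
  have hm2 := hm_shift a m n (s+1) hm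
  have hr1 := co_R1 a ha m n s
  unfold Ecoef
  rcases Nat.lt_or_ge s m with hsm | hsm
  · have c1 : ((m-(s+1):ℕ):ℝ) = (m:ℝ) - s - 1 := by
      push_cast [Nat.cast_sub (by omega : s+1 ≤ m)]; ring
    have c2 : ((m-s:ℕ):ℝ) = (m:ℝ) - s := by
      push_cast [Nat.cast_sub (by omega : s ≤ m)]; ring
    rw [c1] at hm2
    rw [c2] at hm1 ⊢
    rw [c2] at hr1
    linear_combination ((a+(s:ℝ)+1) * ((n-s:ℕ):ℝ)) * hm1 + ((a+(s:ℝ)+1)*((s:ℝ)+1)) * hm2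
      + (((m:ℝ)-s-1)) * hr1
  · rw [co_eq_zero_left a n (by omega : m - 1 < s),
        co_eq_zero_left a n (by omega : m - 1 < s + 1),
        show ((m-s:ℕ):ℝ) = 0 by rw [Nat.sub_eq_zero_of_le hsm]; simp]
    ring

lemma hEp (a : ℝ) (ha : -1 < a) (m n : ℕ) (s : ℕ) (hm : 1 ≤ m) :
    (m:ℝ) * Epcoef a m n s = (a + m) * s * co a m n s := by
  cases s with
  | zero => simp [Epcoef]
  | succ r =>
    have h2 := hE a ha m n r hm
    have hr1 := co_R1 a ha m n r
    have hA1 := cast_ne a ha r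
    have h3 : (a + r + 1) * ((m:ℝ) * Epcoef a m n (r+1))
        = (a + r + 1) * ((a + m) * ((r:ℝ)+1) * co a m n (r+1)) := by
      show (a + (r:ℝ) + 1) * ((m:ℝ) * Ecoef a m n r) = _
      linear_combination h2 - (a + (m:ℝ)) * hr1
    have := mul_left_cancel₀ hA1 h3
    rw [this]
    push_cast
    ring

lemma key_coef (a : ℝ) (ha : -1 < a) (m n s : ℕ) :
    ((m:ℝ) + n + a + 1) * co a m n s =
      (((n:ℝ) + a + 1) / ((n:ℝ) + 1)) * Acoef a m n s
      - (if m = 0 then (0:ℝ) else (m:ℝ) / ((m:ℝ) + a)) * (Ecoef a m n s - Epcoef a m n s) := by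
  have hA1 := cast_ne a ha s
  have hn1 : (n:ℝ) + 1 ≠ 0 := by positivity
  rcases Nat.eq_zero_or_pos m with hm | hm
  · subst hm
    rw [if_pos rfl]
    have h1 := hA_identity a ha 0 n s
    rw [show ((0 - s : ℕ):ℝ) = 0 by simp] at h1
    have hA : Acoef a 0 n s = ((n:ℝ)+1) * co a 0 n s := by
      apply mul_left_cancel₀ hA1
      rw [h1]; ring
    rw [hA]
    push_cast
    field_simp
    ring
  · have hm0 : m ≠ 0 := by omega
    rw [if_neg hm0]
    have hmr : (0:ℝ) < (m:ℝ) := by exact_mod_cast hm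
    have hma : (m:ℝ) + a ≠ 0 := by
      have h1 : (1:ℝ) ≤ (m:ℝ) := by exact_mod_cast hm
      intro hc; linarith
    have h1 := hA_identity a ha m n s
    have h2 := hE a ha m n s hm
    have h3 := hEp a ha m n s hm
    rcases Nat.lt_or_ge (min m n) s with hbad | hgood
    · have hc0 : co a m n s = 0 := co_min_zero a hbad
      rw [hc0] at h1 h2 h3
      have hA : Acoef a m n s = 0 := by
        apply mul_left_cancel₀ hA1; rw [h1]; ring
      have hEe : Ecoef a m n s = 0 := by
        apply mul_left_cancel₀ (mul_ne_zero (by linarith : (m:ℝ) ≠ 0) hA1)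
        rw [mul_assoc] at h2 ⊢
        rw [h2]; ring
      have hEp0 : Epcoef a m n s = 0 := by
        apply mul_left_cancel₀ (by linarith : (m:ℝ) ≠ 0)
        rw [h3]; ring
      rw [hc0, hA, hEe, hEp0]
      ring
    · have hsm : s ≤ m := by omega
      have hsn : s ≤ n := by omega
      rw [show ((m-s:ℕ):ℝ) = (m:ℝ) - s by push_cast [Nat.cast_sub hsm]; ring] at h1 h2
      rw [show ((n-s:ℕ):ℝ) = (n:ℝ) - s by push_cast [Nat.cast_sub hsn]; ring] at h2
      apply mul_left_cancel₀ hA1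
      field_simp
      apply mul_left_cancel₀ hA1
      linear_combination (-((n:ℝ)+a+1)*((m:ℝ)+a)) * h1 + ((n:ℝ)+1) * h2 - (((n:ℝ)+1)*(a+(s:ℝ)+1)) * h3

lemma Ecoef_zero (a : ℝ) (m n s : ℕ) (hm : 1 ≤ m) (h : m ≤ s ∨ n ≤ s) :
    Ecoef a m n s = 0 := by
  unfold Ecoef
  rcases h with h | h
  · rw [co_eq_zero_left a n (by omega), co_eq_zero_left a n (by omega)]
    ring
  · rw [(co_eq_zero_right a (m-1) (show n < s+1 by omega) : co a (m-1) n (s+1) = 0),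
      show ((n - s : ℕ):ℝ) = 0 by rw [Nat.sub_eq_zero_of_le h]; simp]
    ring

lemma keyAlg (a : ℝ) (ha : -1 < a) (m n : ℕ) (u v : ℂ) :
    ((((m:ℝ) + n + a + 1) : ℝ) : ℂ) * ∑ s ∈ Finset.range (m+n+2),
        ((co a m n s : ℝ):ℂ) * (u^(m-s) * v^(n-s) * (u*v-1)^s)
    = ((((n:ℝ)+a+1)/((n:ℝ)+1) : ℝ):ℂ) * ∑ s ∈ Finset.range (m+n+3), ((co a m (n+1) s : ℝ):ℂ) *
        (((n+1-s : ℕ):ℂ) * u^(m-s) * v^(n+1-s-1) * (u*v-1)^s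
          + (s:ℂ) * u^(m-s+1) * v^(n+1-s) * (u*v-1)^(s-1))
    - (((if m = 0 then (0:ℝ) else (m:ℝ)/((m:ℝ)+a)) : ℝ):ℂ) * ∑ s ∈ Finset.range (m+n+2),
        ((co a (m-1) n s : ℝ):ℂ) *
        (((n-s : ℕ):ℂ) * u^(m-1-s) * v^(n-s-1) * (u*v-1)^s
          + (s:ℂ) * u^(m-1-s+1) * v^(n-s) * (u*v-1)^(s-1)) := by
  -- Step 1 : rewrite the (m, n+1) sum in terms of Acoef
  have h1 : ∑ s ∈ Finset.range (m+n+3), ((co a m (n+1) s : ℝ):ℂ) *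
        (((n+1-s : ℕ):ℂ) * u^(m-s) * v^(n+1-s-1) * (u*v-1)^s
          + (s:ℂ) * u^(m-s+1) * v^(n+1-s) * (u*v-1)^(s-1))
      = ∑ s ∈ Finset.range (m+n+3), ((Acoef a m n s : ℝ):ℂ) *
          (u^(m-s) * v^(n-s) * (u*v-1)^s) := by
    simp only [mul_add]
    rw [Finset.sum_add_distrib]
    have h1a : ∑ s ∈ Finset.range (m+n+3),
        ((co a m (n+1) s : ℝ):ℂ) * (((n+1-s : ℕ):ℂ) * u^(m-s) * v^(n+1-s-1) * (u*v-1)^s)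
        = ∑ s ∈ Finset.range (m+n+3),
          (((((n+1-s:ℕ):ℝ) * co a m (n+1) s) : ℝ):ℂ) * (u^(m-s) * v^(n-s) * (u*v-1)^s) := by
      apply Finset.sum_congr rfl
      intro s _
      rw [show n+1-s-1 = n-s from by omega]
      push_cast
      ring
    have h1b : ∑ s ∈ Finset.range (m+n+3),
        ((co a m (n+1) s : ℝ):ℂ) * ((s:ℂ) * u^(m-s+1) * v^(n+1-s) * (u*v-1)^(s-1))
        = ∑ s ∈ Finset.range (m+n+3),
          (((((s:ℝ)+1) * co a m (n+1) (s+1)) : ℝ):ℂ) * (u^(m-s) * v^(n-s) * (u*v-1)^s) := by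
      rw [Finset.sum_range_succ' (fun s => ((co a m (n+1) s : ℝ):ℂ) *
        ((s:ℂ) * u^(m-s+1) * v^(n+1-s) * (u*v-1)^(s-1))) (m+n+2)]
      rw [Finset.sum_range_succ (fun s => (((((s:ℝ)+1) * co a m (n+1) (s+1)) : ℝ):ℂ) *
        (u^(m-s) * v^(n-s) * (u*v-1)^s)) (m+n+2)]
      rw [co_eq_zero_left a (n+1) (show m < m+n+2+1 by omega)]
      simp only [Nat.cast_zero, zero_mul, mul_zero, add_zero, Complex.ofReal_zero]
      apply Finset.sum_congr rfl
      intro s _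
      rw [show n+1-(s+1) = n-s from by omega, show s+1-1 = s from rfl]
      rcases Nat.lt_or_ge s m with h | h
      · rw [show m-(s+1)+1 = m-s from by omega]
        push_cast
        ring
      · rw [co_eq_zero_left a (n+1) (by omega : m < s+1)]
        push_cast
        ring
    rw [h1a, h1b, ← Finset.sum_add_distrib]
    apply Finset.sum_congr rfl
    intro s _
    unfold Acoef
    push_cast
    ring
  -- Step 2 : rewrite the (m-1, n) sum in terms of Ecoef
  have h2 : ∑ s ∈ Finset.range (m+n+2), ((co a (m-1) n s : ℝ):ℂ) *
        (((n-s : ℕ):ℂ) * u^(m-1-s) * v^(n-s-1) * (u*v-1)^s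
          + (s:ℂ) * u^(m-1-s+1) * v^(n-s) * (u*v-1)^(s-1))
      = ∑ s ∈ Finset.range (m+n+2), ((Ecoef a m n s : ℝ):ℂ) *
          (u^(m-1-s) * v^(n-1-s) * (u*v-1)^s) := by
    simp only [mul_add]
    rw [Finset.sum_add_distrib]
    have h2a : ∑ s ∈ Finset.range (m+n+2),
        ((co a (m-1) n s : ℝ):ℂ) * (((n-s : ℕ):ℂ) * u^(m-1-s) * v^(n-s-1) * (u*v-1)^s)
        = ∑ s ∈ Finset.range (m+n+2),
          (((((n-s:ℕ):ℝ) * co a (m-1) n s) : ℝ):ℂ) * (u^(m-1-s) * v^(n-1-s) * (u*v-1)^s) := by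
      apply Finset.sum_congr rfl
      intro s _
      rw [show n-s-1 = n-1-s from by omega]
      push_cast
      ring
    have h2b : ∑ s ∈ Finset.range (m+n+2),
        ((co a (m-1) n s : ℝ):ℂ) * ((s:ℂ) * u^(m-1-s+1) * v^(n-s) * (u*v-1)^(s-1))
        = ∑ s ∈ Finset.range (m+n+2),
          (((((s:ℝ)+1) * co a (m-1) n (s+1)) : ℝ):ℂ) * (u^(m-1-s) * v^(n-1-s) * (u*v-1)^s) := by
      rw [Finset.sum_range_succ' (fun s => ((co a (m-1) n s : ℝ):ℂ) *
        ((s:ℂ) * u^(m-1-s+1) * v^(n-s) * (u*v-1)^(s-1))) (m+n+1)]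
      rw [Finset.sum_range_succ (fun s => (((((s:ℝ)+1) * co a (m-1) n (s+1)) : ℝ):ℂ) *
        (u^(m-1-s) * v^(n-1-s) * (u*v-1)^s)) (m+n+1)]
      rw [co_eq_zero_left a n (show m-1 < m+n+1+1 by omega)]
      simp only [Nat.cast_zero, zero_mul, mul_zero, add_zero, Complex.ofReal_zero]
      apply Finset.sum_congr rfl
      intro s _
      rw [show n-(s+1) = n-1-s from by omega, show s+1-1 = s from rfl]
      rcases Nat.lt_or_ge (s+1) m with h | h
      · rw [show m-1-(s+1)+1 = m-1-s from by omega]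
        push_cast
        ring
      · rw [co_eq_zero_left a n (by omega : m-1 < s+1)]
        push_cast
        ring
    rw [h2a, h2b, ← Finset.sum_add_distrib]
    apply Finset.sum_congr rfl
    intro s _
    unfold Ecoef
    push_cast
    ring
  rw [h1, h2]
  -- Step 3 : telescoping, multiplied by the kappa coefficient
  have h3 : (((if m = 0 then (0:ℝ) else (m:ℝ)/((m:ℝ)+a)) : ℝ):ℂ) *
        ∑ s ∈ Finset.range (m+n+2), ((Ecoef a m n s : ℝ):ℂ) * (u^(m-1-s) * v^(n-1-s) * (u*v-1)^s)
      = (((if m = 0 then (0:ℝ) else (m:ℝ)/((m:ℝ)+a)) : ℝ):ℂ) *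
        (∑ s ∈ Finset.range (m+n+3), ((Ecoef a m n s : ℝ):ℂ) * (u^(m-s) * v^(n-s) * (u*v-1)^s)
         - ∑ s ∈ Finset.range (m+n+3), ((Epcoef a m n s : ℝ):ℂ) * (u^(m-s) * v^(n-s) * (u*v-1)^s)) := by
    rcases Nat.eq_zero_or_pos m with hm | hm
    · subst hm; simp
    · congr 1
      have ht : ∑ s ∈ Finset.range (m+n+2), ((Ecoef a m n s : ℝ):ℂ) *
            (u^(m-1-s) * v^(n-1-s) * (u*v-1)^s)
          = ∑ s ∈ Finset.range (m+n+2), (((Ecoef a m n s : ℝ):ℂ) *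
              (u^(m-s) * v^(n-s) * (u*v-1)^s)
            - ((Ecoef a m n s : ℝ):ℂ) * (u^(m-(s+1)) * v^(n-(s+1)) * (u*v-1)^(s+1))) := by
        apply Finset.sum_congr rfl
        intro s _
        rcases Nat.lt_or_ge s m with h | h
        · rcases Nat.lt_or_ge s n with h' | h'
          · rw [show m-s = (m-1-s)+1 from by omega, show n-s = (n-1-s)+1 from by omega,
              show m-(s+1) = m-1-s from by omega, show n-(s+1) = n-1-s from by omega]
            ring
          · rw [Ecoef_zero a m n s hm (Or.inr h')]
            push_cast
            ring
        · rw [Ecoef_zero a m n s hm (Or.inl h)]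
          push_cast
          ring
      rw [ht, Finset.sum_sub_distrib]
      congr 1
      · rw [Finset.sum_range_succ (fun s => ((Ecoef a m n s : ℝ):ℂ) *
          (u^(m-s) * v^(n-s) * (u*v-1)^s)) (m+n+2)]
        rw [Ecoef_zero a m n (m+n+2) hm (Or.inl (by omega))]
        simp
      · rw [Finset.sum_range_succ' (fun s => ((Epcoef a m n s : ℝ):ℂ) *
          (u^(m-s) * v^(n-s) * (u*v-1)^s)) (m+n+2)]
        simp only [Epcoef, Complex.ofReal_zero, zero_mul, add_zero]
  rw [h3]
  -- Final : per-coefficient identity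
  have hext : ((((m:ℝ) + n + a + 1) : ℝ) : ℂ) * ∑ s ∈ Finset.range (m+n+2),
        ((co a m n s : ℝ):ℂ) * (u^(m-s) * v^(n-s) * (u*v-1)^s)
      = ((((m:ℝ) + n + a + 1) : ℝ) : ℂ) * ∑ s ∈ Finset.range (m+n+3),
        ((co a m n s : ℝ):ℂ) * (u^(m-s) * v^(n-s) * (u*v-1)^s) := by
    congr 1
    rw [Finset.sum_range_succ (fun s => ((co a m n s : ℝ):ℂ) *
      (u^(m-s) * v^(n-s) * (u*v-1)^s)) (m+n+2)]
    rw [co_min_zero a (show min m n < m+n+2 by omega)]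
    simp
  rw [hext]
  simp only [Finset.mul_sum, mul_sub]
  rw [← Finset.sum_sub_distrib, ← Finset.sum_sub_distrib]
  apply Finset.sum_congr rfl
  intro s _
  have hk := key_coef a ha m n s
  have hkC := congrArg (fun r : ℝ => (r : ℂ)) hk
  push_cast at hkC
  push_cast
  linear_combination (u^(m-s) * v^(n-s) * (u*v-1)^s) * hkC

end ZD
open ZD

/-- **Same-parameter expansions via first-order derivatives.** For `α > −1` and `m, n ∈ ℕ₀`,
on the unit disk:
`(m+n+α+1) P^α_{m,n} = [(n+α+1)/(n+1)] ∂_z̄ P^α_{m,n+1} − [m/(m+α)] ∂_z̄ P^α_{m−1,n}` and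
`(m+n+α+1) P^α_{m,n} = [(m+α+1)/(m+1)] ∂_z P^α_{m+1,n} − [n/(n+α)] ∂_z P^α_{m,n−1}`,
where the coefficient `m/(m+α)` (resp. `n/(n+α)`) is interpreted as `0` when `m = 0`
(resp. `n = 0`), so that the corresponding term vanishes. -/
theorem zernike_derivative_expansions (a : ℝ) (ha : -1 < a) (m n : ℕ) :
    ∀ x ∈ Metric.ball (0 : E 2) 1,
      ((((m : ℝ) + n + a + 1) : ℝ) : ℂ) * zern a m n x =
          ((((n : ℝ) + a + 1) / ((n : ℝ) + 1) : ℝ) : ℂ) * dzbar (zern a m (n + 1)) x -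
            (((if m = 0 then (0 : ℝ) else (m : ℝ) / ((m : ℝ) + a)) : ℝ) : ℂ) *
              dzbar (zern a (m - 1) n) x ∧
      ((((m : ℝ) + n + a + 1) : ℝ) : ℂ) * zern a m n x =
          ((((m : ℝ) + a + 1) / ((m : ℝ) + 1) : ℝ) : ℂ) * dz (zern a (m + 1) n) x -
            (((if n = 0 then (0 : ℝ) else (n : ℝ) / ((n : ℝ) + a)) : ℝ) : ℂ) *
              dz (zern a m (n - 1)) x := by
  intro x _
  constructor
  · have key := keyAlg a ha m n (UL x) (VL x)
    rw [zern_fun_eq a ha m n (m+n+2) (by omega),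
        zern_fun_eq a ha m (n+1) (m+n+3) (by omega),
        zern_fun_eq a ha (m-1) n (m+n+2) (by omega),
        dzbar_znsum, dzbar_znsum]
    unfold znsum
    exact key
  · have hswap := keyAlg a ha n m (VL x) (UL x)
    rw [zern_fun_eq a ha m n (n+m+2) (by omega),
        zern_fun_eq a ha (m+1) n (n+m+3) (by omega),
        zern_fun_eq a ha m (n-1) (n+m+2) (by omega),
        dz_znsum, dz_znsum]
    refine Eq.trans (Eq.trans ?_ hswap) ?_
    · unfold znsum
      rw [show ((m:ℝ)+(n:ℝ)+a+1) = ((n:ℝ)+(m:ℝ)+a+1) from by ring]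
      congr 1
      apply Finset.sum_congr rfl
      intro s _
      rw [co_symm a m n s]
      ring
    · congr 1
      · congr 1
        apply Finset.sum_congr rfl
        intro s _
        rw [co_symm a n (m+1) s]
        ring
      · congr 1
        apply Finset.sum_congr rfl
        intro s _
        rw [co_symm a (n-1) m s]
        ring

end
end
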